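/- In Approval voting with n ≥ 2 candidates, approving exactly the candidates {c_1,…,c_{n−1}} (all candidates except the worst one c_n) is loss-averse and is the unique loss-averse action. -/

import Mathlib

/-- The set of nature states on which two actions `a`, `a'` give different utilities. -/
def diffStates {A N : Type*} (u : A → N → ℝ) (a a' : A) : Set N :=
  {η | u a η ≠ u a' η}

/-- The infimum (in the extended reals, so that the infimum over the empty set is `+∞`)
of the utility of action `c` over a set `s` of nature states. -/
noncomputable def infOn {A N : Type*} (u : A → N → ℝ) (c : A) (s : Set N) : EReal :=
  ⨅ η ∈ s, (u c η : EReal)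

/-- An action `a` is loss-averse if for every other action `a'`, over the set of nature states
where the two actions' utilities differ, the infimum of `a`'s utility is at least the infimum
of `a'`'s utility. -/
def LossAverse {A N : Type*} (u : A → N → ℝ) (a : A) : Prop :=
  ∀ a' : A, infOn u a' (diffStates u a a') ≤ infOn u a (diffStates u a a')

/-- The winner for a vector of total scores: the candidate with maximal total score,
ties broken toward the largest index (the worst candidate). -/
noncomputable def winner {n : ℕ} (hn : 0 < n) (total : Fin n → ℕ) : Fin n :=
  (Finset.univ.filter fun j => ∀ k, total k ≤ total j).max' (by
    haveI : Nonempty (Fin n) := ⟨⟨0, hn⟩⟩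
    obtain ⟨j, -, hj⟩ :=
      Finset.exists_max_image (Finset.univ : Finset (Fin n)) total Finset.univ_nonempty
    exact ⟨j, Finset.mem_filter.mpr ⟨Finset.mem_univ _, fun k => hj k (Finset.mem_univ _)⟩⟩)

/-- Approval voting from a single voter's perspective, with cardinal utilities `f` over the
`n` candidates: the voter approves a subset `V` of candidates, a nature state is the vector
`s` of points awarded by the other voters, candidate `j`'s total score is `s j` plus one if
`j ∈ V`, the winner is the candidate of maximal total score (ties broken toward the largest
index, i.e. the worst candidate), and the voter receives `f` of the winner. -/
noncomputable def approvalU {n : ℕ} (hn : 0 < n) (f : Fin n → ℝ)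
    (V : Finset (Fin n)) (s : Fin n → ℕ) : ℝ :=
  f (winner hn fun j => s j + if j ∈ V then 1 else 0)

section Aux
variable {n : ℕ}

lemma winner_argmax (hn : 0 < n) (total : Fin n → ℕ) (k : Fin n) :
    total k ≤ total (winner hn total) := by
  have h : winner hn total ∈ Finset.univ.filter fun j => ∀ k, total k ≤ total j := by
    unfold winner; exact Finset.max'_mem _ _
  exact (Finset.mem_filter.mp h).2 k

lemma winner_eq_of (hn : 0 < n) (total : Fin n → ℕ) (j : Fin n)
    (h1 : ∀ k, total k ≤ total j) (h2 : ∀ k, (∀ m, total m ≤ total k) → k ≤ j) :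
    winner hn total = j := by
  have hj : j ∈ Finset.univ.filter fun j => ∀ k, total k ≤ total j :=
    Finset.mem_filter.mpr ⟨Finset.mem_univ _, h1⟩
  unfold winner
  refine le_antisymm (Finset.max'_le _ _ _ ?_) (Finset.le_max' _ _ hj)
  intro k hk
  exact h2 k (Finset.mem_filter.mp hk).2

end Aux

section Aux2
variable {n : ℕ}

lemma pos_of_two_le' {n : ℕ} (hn : 2 ≤ n) : 0 < n := by omega

lemma sub_one_lt_of_two_le' {n : ℕ} (hn : 2 ≤ n) : n - 1 < n := by omega

lemma shield (hn : 2 ≤ n) (V : Finset (Fin n)) (s : Fin n → ℕ)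
    (h : winner (show 0 < n from pos_of_two_le' hn)
        (fun j => s j + if j ∈ Finset.univ.erase (⟨n - 1, sub_one_lt_of_two_le' hn⟩ : Fin n) then 1 else 0)
        = ⟨n - 1, sub_one_lt_of_two_le' hn⟩) :
    winner (show 0 < n from pos_of_two_le' hn) (fun j => s j + if j ∈ V then 1 else 0)
        = ⟨n - 1, sub_one_lt_of_two_le' hn⟩ := by
  set last : Fin n := ⟨n - 1, by omega⟩ with hld
  have hle_last : ∀ k : Fin n, k ≤ last := by
    intro k; have := k.isLt
    rw [Fin.le_def]; show k.val ≤ n - 1; omega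
  have hmax := winner_argmax (show 0 < n by omega)
      (fun j => s j + if j ∈ Finset.univ.erase last then 1 else 0)
  rw [h] at hmax
  have hlastmem : last ∉ Finset.univ.erase last := by simp
  have hkey : ∀ k : Fin n, k ≠ last → s k + 1 ≤ s last := by
    intro k hk
    have h' := hmax k
    rw [if_pos (Finset.mem_erase.mpr ⟨hk, Finset.mem_univ k⟩), if_neg hlastmem] at h'
    omega
  apply winner_eq_of
  · intro k
    by_cases hk : k = last
    · rw [hk]
    · have h2 := hkey k hk
      have h1 : (if k ∈ V then 1 else 0 : ℕ) ≤ 1 := by split <;> omega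
      have h3 : (0:ℕ) ≤ (if last ∈ V then 1 else 0 : ℕ) := by omega
      omega
  · intro k _; exact hle_last k

lemma key (hn : 2 ≤ n) (f : Fin n → ℝ) (hf : StrictAnti f)
    (hlast : f ⟨n - 1, sub_one_lt_of_two_le' hn⟩ = 0)
    (V : Finset (Fin n)) (hV : V ≠ Finset.univ.erase ⟨n - 1, sub_one_lt_of_two_le' hn⟩) :
    ∃ s : Fin n → ℕ, approvalU (show 0 < n from pos_of_two_le' hn) f V s = 0 ∧
      0 < approvalU (show 0 < n from pos_of_two_le' hn) f (Finset.univ.erase ⟨n - 1, sub_one_lt_of_two_le' hn⟩) s := by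
  set last : Fin n := ⟨n - 1, by omega⟩ with hld
  set pen : Fin n := ⟨n - 2, by omega⟩ with hpd
  have hlv' : last.val = n - 1 := rfl
  have hpv : pen.val = n - 2 := rfl
  have hle_last : ∀ k : Fin n, k ≤ last := by
    intro k; have := k.isLt
    rw [Fin.le_def, hlv']; omega
  have hpenne : pen ≠ last := by
    intro hc
    have := congrArg Fin.val hc
    rw [hpv, hlv'] at this; omega
  have hpenlt : pen < last := by
    rw [Fin.lt_def, hpv, hlv']; omega
  have hfpos : 0 < f pen := by rw [← hlast]; exact hf hpenlt
  have hval_le : ∀ k : Fin n, k ≠ last → k ≤ pen := by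
    intro k hk
    have := k.isLt
    have hkn : k.val ≠ n - 1 := by
      intro hc; exact hk (Fin.ext (by rw [hlv']; exact hc))
    rw [Fin.le_def, hpv]; omega
  by_cases hlvmem : last ∈ V
  · -- state s ≡ 0
    refine ⟨fun _ => 0, ?_, ?_⟩
    · unfold approvalU
      have hw : winner (show 0 < n by omega) (fun j => 0 + if j ∈ V then 1 else 0) = last := by
        apply winner_eq_of
        · intro k; simp only [if_pos hlvmem]; split <;> omega
        · intro k _; exact hle_last k
      rw [hw, hlast]
    · unfold approvalU
      have hpm : pen ∈ Finset.univ.erase last :=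
        Finset.mem_erase.mpr ⟨hpenne, Finset.mem_univ _⟩
      have hlm : last ∉ Finset.univ.erase last := by simp
      have hw : winner (show 0 < n by omega)
          (fun j => 0 + if j ∈ Finset.univ.erase last then 1 else 0) = pen := by
        apply winner_eq_of
        · intro k
          simp only [if_pos hpm]; split <;> omega
        · intro k hk
          have hp := hk pen
          simp only [if_pos hpm] at hp
          by_cases hkl : k = last
          · exfalso
            rw [hkl] at hp
            simp only [if_neg hlm] at hp; omega
          · exact hval_le k hkl
      rw [hw]; exact hfpos
  · -- last ∉ V
    have hss : V ⊂ Finset.univ.erase last := by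
      constructor
      · intro x hx
        refine Finset.mem_erase.mpr ⟨?_, Finset.mem_univ _⟩
        intro hc; rw [hc] at hx; exact hlvmem hx
      · intro hc
        exact hV (le_antisymm (fun x hx => Finset.mem_erase.mpr
          ⟨fun he => hlvmem (by rw [← he]; exact hx), Finset.mem_univ _⟩) hc)
    obtain ⟨i, hi_mem, hi_notV⟩ := Finset.exists_of_ssubset hss
    have hine : i ≠ last := (Finset.mem_erase.mp hi_mem).1
    have hilt : i < last := lt_of_le_of_ne (hle_last i) hine
    set s : Fin n → ℕ := fun j => if j = i ∨ j = last then 1 else 0 with hsd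
    have hsl : s last = 1 := by simp [hsd]
    have hsi : s i = 1 := by simp [hsd]
    have hsk1 : ∀ k, s k ≤ 1 := by intro k; simp only [hsd]; split <;> omega
    have hs0 : ∀ k, k ≠ i → k ≠ last → s k = 0 := by
      intro k h1 h2; simp [hsd, h1, h2]
    refine ⟨s, ?_, ?_⟩
    · unfold approvalU
      have hw : winner (show 0 < n by omega)
          (fun j => s j + if j ∈ V then 1 else 0) = last := by
        apply winner_eq_of
        · intro k
          rw [hsl, if_neg hlvmem]
          by_cases hkv : k ∈ V
          · have hki : k ≠ i := fun hc => hi_notV (hc ▸ hkv)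
            have hkl : k ≠ last := fun hc => hlvmem (hc ▸ hkv)
            rw [hs0 k hki hkl, if_pos hkv]
          · rw [if_neg hkv]
            have := hsk1 k; omega
        · intro k _; exact hle_last k
      rw [hw, hlast]
    · unfold approvalU
      have hi_mem' : i ∈ Finset.univ.erase last := hi_mem
      have hlm : last ∉ Finset.univ.erase last := by simp
      have hw : winner (show 0 < n by omega)
          (fun j => s j + if j ∈ Finset.univ.erase last then 1 else 0) = i := by
        apply winner_eq_of
        · intro k
          rw [hsi, if_pos hi_mem']
          have := hsk1 k
          split <;> omega
        · intro k hk
          have hp := hk i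
          rw [hsi, if_pos hi_mem'] at hp
          by_cases hkl : k = last
          · exfalso
            rw [hkl] at hp
            rw [if_neg hlm, hsl] at hp; omega
          · by_cases hki : k = i
            · exact le_of_eq hki
            · exfalso
              rw [hs0 k hki hkl, if_pos (Finset.mem_erase.mpr ⟨hkl, Finset.mem_univ _⟩)] at hp
              omega
      rw [hw, ← hlast]
      exact hf hilt
end Aux2


/-- in Approval voting with `n ≥ 2` candidates and cardinal utilities
`1 = f 0 > f 1 > … > f (n-1) = 0`, approving exactly the candidates other than the worst
one is loss-averse and is the unique loss-averse action. -/
theorem approval_lossAverse_unique (n : ℕ) (hn : 2 ≤ n) (f : Fin n → ℝ)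
    (hf : StrictAnti f)
    (h0 : f ⟨0, by omega⟩ = 1) (hlast : f ⟨n - 1, by omega⟩ = 0) :
    LossAverse (approvalU (by omega) f) (Finset.univ.erase ⟨n - 1, by omega⟩) ∧
      ∀ V : Finset (Fin n), LossAverse (approvalU (by omega) f) V →
        V = Finset.univ.erase ⟨n - 1, by omega⟩ := by
  have hle_last : ∀ k : Fin n, k ≤ (⟨n - 1, by omega⟩ : Fin n) := by
    intro k; have := k.isLt
    rw [Fin.le_def]; show k.val ≤ n - 1; omega
  have hnonneg : ∀ (V : Finset (Fin n)) (s : Fin n → ℕ),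
      0 ≤ approvalU (show 0 < n by omega) f V s := by
    intro V s
    unfold approvalU
    rw [← hlast]
    exact hf.antitone (hle_last _)
  -- if utilities differ from Vstar's, then Vstar's utility is at least f(pen) > 0
  have hsh : ∀ (V : Finset (Fin n)) (η : Fin n → ℕ),
      approvalU (show 0 < n by omega) f V η ≠
        approvalU (show 0 < n by omega) f (Finset.univ.erase ⟨n - 1, by omega⟩) η →
      f (⟨n - 2, by omega⟩ : Fin n) ≤
        approvalU (show 0 < n by omega) f (Finset.univ.erase ⟨n - 1, by omega⟩) η := by
    intro V η hne
    unfold approvalU at hne ⊢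
    by_cases hw : winner (show 0 < n by omega)
        (fun j => η j + if j ∈ Finset.univ.erase (⟨n - 1, by omega⟩ : Fin n) then 1 else 0)
        = ⟨n - 1, by omega⟩
    · exact absurd (by rw [shield hn V η hw, hw]) hne
    · apply hf.antitone
      set w := winner (show 0 < n by omega)
        (fun j => η j + if j ∈ Finset.univ.erase (⟨n - 1, by omega⟩ : Fin n) then 1 else 0)
      have h1 := w.isLt
      have h2 : w.val ≠ n - 1 := by
        intro hc; exact hw (Fin.ext hc)
      rw [Fin.le_def]; show w.val ≤ n - 2; omega
  have hpenpos : 0 < f (⟨n - 2, by omega⟩ : Fin n) := by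
    rw [← hlast]
    exact hf (by rw [Fin.lt_def]; show n - 2 < n - 1; omega)
  constructor
  · intro V'
    by_cases hV' : V' = Finset.univ.erase ⟨n - 1, by omega⟩
    · subst hV'; exact le_refl _
    · obtain ⟨s, hs0, hspos⟩ := key hn f hf hlast V' hV'
      have hsD : s ∈ diffStates (approvalU (show 0 < n by omega) f)
          (Finset.univ.erase ⟨n - 1, by omega⟩) V' := by
        show approvalU _ f _ s ≠ approvalU _ f V' s
        rw [hs0]
        exact ne_of_gt hspos
      calc infOn (approvalU (show 0 < n by omega) f) V'
            (diffStates (approvalU (show 0 < n by omega) f)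
              (Finset.univ.erase ⟨n - 1, by omega⟩) V')
          ≤ ((approvalU (show 0 < n by omega) f V' s : ℝ) : EReal) := iInf₂_le s hsD
        _ = (0 : EReal) := by rw [hs0]; exact EReal.coe_zero
        _ ≤ _ := by
            apply le_iInf₂
            intro η _
            exact_mod_cast hnonneg _ η
  · intro V hLA
    by_contra hne
    obtain ⟨s, hs0, hspos⟩ := key hn f hf hlast V hne
    have h := hLA (Finset.univ.erase ⟨n - 1, by omega⟩)
    have hsD : s ∈ diffStates (approvalU (show 0 < n by omega) f) V
        (Finset.univ.erase ⟨n - 1, by omega⟩) := by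
      show approvalU _ f V s ≠ approvalU _ f _ s
      rw [hs0]
      exact (ne_of_gt hspos).symm
    have hB : infOn (approvalU (show 0 < n by omega) f) V
        (diffStates (approvalU (show 0 < n by omega) f) V
          (Finset.univ.erase ⟨n - 1, by omega⟩)) ≤ (0 : EReal) := by
      calc _ ≤ ((approvalU (show 0 < n by omega) f V s : ℝ) : EReal) := iInf₂_le s hsD
        _ = (0 : EReal) := by rw [hs0]; exact EReal.coe_zero
    have hA : ((f (⟨n - 2, by omega⟩ : Fin n) : ℝ) : EReal) ≤
        infOn (approvalU (show 0 < n by omega) f) (Finset.univ.erase ⟨n - 1, by omega⟩)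
          (diffStates (approvalU (show 0 < n by omega) f) V
            (Finset.univ.erase ⟨n - 1, by omega⟩)) := by
      apply le_iInf₂
      intro η hη
      exact_mod_cast hsh V η hη
    have hfinal : ((f (⟨n - 2, by omega⟩ : Fin n) : ℝ) : EReal) ≤ (0 : EReal) :=
      le_trans hA (le_trans h hB)
    have : f (⟨n - 2, by omega⟩ : Fin n) ≤ 0 := by exact_mod_cast hfinal
    linarith
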